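/- For a nonzero real binary quartic Q, the following are equivalent: (i) I(Q) = 0, J(Q) = 0, and the Hessian covariant H_Q is not identically zero; (ii) Q = c·ℓ³·m for some real number c ≠ 0 and non-proportional nonzero real linear forms ℓ and m, i.e., Q has one triple real root and one distinct simple real root. -/

import Mathlib

/-- The real binary quartic `Q(X,Y) = aX⁴ + bX³Y + cX²Y² + dXY³ + eY⁴` as a
function of two real variables. -/
def Qf (a b c d e : ℝ) : ℝ → ℝ → ℝ := fun X Y =>
  a * X ^ 4 + b * X ^ 3 * Y + c * X ^ 2 * Y ^ 2 + d * X * Y ^ 3 + e * Y ^ 4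

/-- The Hessian covariant `H_Q = Q_XX·Q_YY − (Q_XY)²` of the binary quartic. -/
noncomputable def HessQ (a b c d e : ℝ) (X Y : ℝ) : ℝ :=
  deriv (fun x => deriv (fun x' => Qf a b c d e x' Y) x) X *
    deriv (fun y => deriv (fun y' => Qf a b c d e X y') y) Y -
  (deriv (fun y => deriv (fun x => Qf a b c d e x y) X) Y) ^ 2

/-- The fundamental invariant `I = 12ae − 3bd + c²` of a real binary quartic. -/
def Iinv (a b c d e : ℝ) : ℝ := 12 * a * e - 3 * b * d + c ^ 2

/-- The fundamental invariant `J = 72aec − 27ad² − 27b²e + 9bcd − 2c³`. -/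
def Jinv (a b c d e : ℝ) : ℝ :=
  72 * a * e * c - 27 * a * d ^ 2 - 27 * b ^ 2 * e + 9 * b * c * d - 2 * c ^ 3

/-- derivative of a real cubic polynomial function -/
lemma cubic_deriv (p3 p2 p1 p0 x : ℝ) :
    deriv (fun t : ℝ => p3*t^3 + p2*t^2 + p1*t + p0) x = 3*p3*x^2 + 2*p2*x + p1 := by
  have h : HasDerivAt (fun t : ℝ => p3*t^3 + p2*t^2 + p1*t + p0)
      (3*p3*x^2 + 2*p2*x + p1) x := by
    have h3 : HasDerivAt (fun t : ℝ => p3 * t^3) (p3 * (3*x^2)) x := by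
      simpa using (hasDerivAt_pow 3 x).const_mul p3
    have h2 : HasDerivAt (fun t : ℝ => p2 * t^2) (p2 * (2*x)) x := by
      simpa using (hasDerivAt_pow 2 x).const_mul p2
    have h1 : HasDerivAt (fun t : ℝ => p1 * t) p1 x := by
      simpa using (hasDerivAt_id x).const_mul p1
    have h0 : HasDerivAt (fun _ : ℝ => p0) 0 x := hasDerivAt_const x _
    have := ((h3.add h2).add h1).add h0
    exact this.congr_deriv (by ring)
  exact h.deriv

lemma quartic_deriv (p4 p3 p2 p1 p0 x : ℝ) :
    deriv (fun t : ℝ => p4*t^4 + p3*t^3 + p2*t^2 + p1*t + p0) x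
      = 4*p4*x^3 + 3*p3*x^2 + 2*p2*x + p1 := by
  have h : HasDerivAt (fun t : ℝ => p4*t^4 + p3*t^3 + p2*t^2 + p1*t + p0)
      (4*p4*x^3 + 3*p3*x^2 + 2*p2*x + p1) x := by
    have h4 : HasDerivAt (fun t : ℝ => p4 * t^4) (p4 * (4*x^3)) x := by
      simpa using (hasDerivAt_pow 4 x).const_mul p4
    have h3 : HasDerivAt (fun t : ℝ => p3 * t^3) (p3 * (3*x^2)) x := by
      simpa using (hasDerivAt_pow 3 x).const_mul p3
    have h2 : HasDerivAt (fun t : ℝ => p2 * t^2) (p2 * (2*x)) x := by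
      simpa using (hasDerivAt_pow 2 x).const_mul p2
    have h1 : HasDerivAt (fun t : ℝ => p1 * t) p1 x := by
      simpa using (hasDerivAt_id x).const_mul p1
    have h0 : HasDerivAt (fun _ : ℝ => p0) 0 x := hasDerivAt_const x _
    have := (((h4.add h3).add h2).add h1).add h0
    exact this.congr_deriv (by ring)
  exact h.deriv

lemma derivX (a b c d e Y x : ℝ) :
    deriv (fun x' => Qf a b c d e x' Y) x
      = 4*a*x^3 + 3*(b*Y)*x^2 + 2*(c*Y^2)*x + d*Y^3 := by
  have h1 : (fun x' => Qf a b c d e x' Y)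
      = fun x' : ℝ => a*x'^4 + (b*Y)*x'^3 + (c*Y^2)*x'^2 + (d*Y^3)*x' + e*Y^4 := by
    funext t; simp only [Qf]; ring
  rw [h1, quartic_deriv]

lemma derivY (a b c d e X y : ℝ) :
    deriv (fun y' => Qf a b c d e X y') y
      = 4*e*y^3 + 3*(d*X)*y^2 + 2*(c*X^2)*y + b*X^3 := by
  have h1 : (fun y' => Qf a b c d e X y')
      = fun y' : ℝ => e*y'^4 + (d*X)*y'^3 + (c*X^2)*y'^2 + (b*X^3)*y' + a*X^4 := by
    funext t; simp only [Qf]; ring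
  rw [h1, quartic_deriv]

lemma hessQ_eq (a b c d e X Y : ℝ) :
    HessQ a b c d e X Y
      = (24*a*c-9*b^2)*X^4 + (72*a*d-12*b*c)*X^3*Y + (144*a*e+18*b*d-12*c^2)*X^2*Y^2
        + (72*b*e-12*c*d)*X*Y^3 + (24*c*e-9*d^2)*Y^4 := by
  unfold HessQ
  have hxx : deriv (fun x => deriv (fun x' => Qf a b c d e x' Y) x) X
      = 12*a*X^2 + 6*b*X*Y + 2*c*Y^2 := by
    have h1 : (fun x => deriv (fun x' => Qf a b c d e x' Y) x)
        = fun x : ℝ => (4*a)*x^3 + (3*(b*Y))*x^2 + (2*(c*Y^2))*x + d*Y^3 := by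
      funext t; rw [derivX]; try ring
    rw [h1, cubic_deriv]; ring
  have hyy : deriv (fun y => deriv (fun y' => Qf a b c d e X y') y) Y
      = 12*e*Y^2 + 6*d*X*Y + 2*c*X^2 := by
    have h1 : (fun y => deriv (fun y' => Qf a b c d e X y') y)
        = fun y : ℝ => (4*e)*y^3 + (3*(d*X))*y^2 + (2*(c*X^2))*y + b*X^3 := by
      funext t; rw [derivY]; try ring
    rw [h1, cubic_deriv]; ring
  have hxy : deriv (fun y => deriv (fun x => Qf a b c d e x y) X) Y
      = 3*b*X^2 + 4*c*X*Y + 3*d*Y^2 := by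
    have h1 : (fun y => deriv (fun x => Qf a b c d e x y) X)
        = fun y : ℝ => (d)*y^3 + (2*c*X)*y^2 + (3*b*X^2)*y + 4*a*X^3 := by
      funext t; rw [derivX]; try ring
    rw [h1, cubic_deriv]; ring
  rw [hxx, hyy, hxy]; ring

/-- For a nonzero real binary quartic `Q`: `I(Q) = 0`, `J(Q) = 0` and `H_Q ≢ 0`
iff `Q = c·ℓ³·m` with `c ≠ 0` and non-proportional nonzero real linear forms
`ℓ`, `m` (one triple real root and a distinct simple real root). -/
theorem I_J_zero_hessian_nonzero_iff_triple_root
    (a b c d e : ℝ) (hQ : ¬(a = 0 ∧ b = 0 ∧ c = 0 ∧ d = 0 ∧ e = 0)) :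
    (Iinv a b c d e = 0 ∧ Jinv a b c d e = 0 ∧
      ¬ ∀ X Y : ℝ, HessQ a b c d e X Y = 0) ↔
    ∃ c0 p q p' q' : ℝ, c0 ≠ 0 ∧ (p, q) ≠ (0, 0) ∧ (p', q') ≠ (0, 0) ∧
      p * q' - q * p' ≠ 0 ∧
      ∀ X Y : ℝ, Qf a b c d e X Y =
        c0 * (p * X + q * Y) ^ 3 * (p' * X + q' * Y) := by

  constructor
  · rintro ⟨hI, hJ, hH⟩
    rw [Iinv] at hI
    rw [Jinv] at hJ
    by_cases ha : a = 0
    · by_cases hb : b = 0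
      · subst ha; subst hb
        have hc : c = 0 := by
          have : c ^ 2 = 0 := by linarith
          exact pow_eq_zero_iff (by norm_num) |>.mp this
        subst hc
        have hd : d ≠ 0 := by
          intro hd0
          apply hH
          intro X Y
          rw [hessQ_eq, hd0]; ring
        refine ⟨1, 0, 1, d, e, one_ne_zero, by simp, by simp [hd], by simpa using hd, ?_⟩
        intro X Y
        simp only [Qf]; ring
      · subst ha
        refine ⟨1/(27*b^2), 3*b, c, 0, 1, by positivity, ?_, by simp, ?_, ?_⟩
        · simp [hb]
        · simpa using mul_ne_zero (by norm_num : (3:ℝ) ≠ 0) hb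
        · intro X Y
          simp only [Qf]
          field_simp
          linear_combination (9*b*X*Y^3 - 18*b*X*Y^3 - 3*c*Y^4)*hI - Y^4*hJ
    · by_cases hal : 8*a*c - 3*b^2 = 0
      · exfalso
        apply hH
        have hw : 16*a^2*d - b^3 = 0 := by
          have h2 : a * (16*a^2*d - b^3)^2 = 0 := by
            linear_combination (-(256/27)*a^4)*hJ +
              ((-1/3)*a*b^4 + (-8/9)*a^2*b^2*c + (-64/27)*a^3*c^2 + (32/3)*a^3*b*d
                + (256/3)*a^4*e)*hal
          have h3 : (16*a^2*d - b^3)^2 = 0 := by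
            rcases mul_eq_zero.mp h2 with h | h
            · exact absurd h ha
            · exact h
          exact pow_eq_zero_iff (by norm_num) |>.mp h3
        have he : 256*a^3*e - b^4 = 0 := by
          linear_combination (64*a^2/3)*hI + 4*b*hw - (1/3)*(8*a*c+3*b^2)*hal
        intro X Y
        rw [hessQ_eq]
        have key : a^4 * ((24*a*c-9*b^2)*X^4 + (72*a*d-12*b*c)*X^3*Y
            + (144*a*e+18*b*d-12*c^2)*X^2*Y^2 + (72*b*e-12*c*d)*X*Y^3
            + (24*c*e-9*d^2)*Y^4) = 0 := by
          linear_combination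
            (3*a^4*X^4 - (3*a^3*b/2)*X^3*Y - (3*a^2*(8*a*c+3*b^2)/16)*X^2*Y^2
              - (3*b^3*a/32)*X*Y^3 + (3*b^4/256)*Y^4)*hal +
            ((9*a^3/2)*X^3*Y + (18*a^2*b/16)*X^2*Y^2 - (24*a*c*a/32)*X*Y^3
              - (9*(16*a^2*d+b^3)/256)*Y^4)*hw +
            ((9*a^2/16)*X^2*Y^2 + (9*a*b/32)*X*Y^3 + (24*a*c/256)*Y^4)*he
        rcases mul_eq_zero.mp key with h | h
        · exact absurd (pow_eq_zero_iff (by norm_num) |>.mp h) ha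
        · exact h
      · -- main case: a ≠ 0, not fourth power
        obtain ⟨r, hr⟩ : ∃ r : ℝ, (8*a*c - 3*b^2) * r = b*c - 6*a*d :=
          ⟨(b*c - 6*a*d)/(8*a*c - 3*b^2), by field_simp⟩
        obtain ⟨s, hs⟩ : ∃ s : ℝ, a * s = -b - 3*a*r :=
          ⟨(-b - 3*a*r)/a, by field_simp⟩
        have hbb : b = -(3*a*r) - a*s := by linarith
        have hcc : c = 3*a*r^2 + 3*a*r*s := by
          have key : (8*a*c-3*b^2)^2 * (c + 3*b*r + 6*a*r^2) = 0 := by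
            linear_combination
              (3*b*(8*a*c-3*b^2) + 6*a*((8*a*c-3*b^2)*r + (b*c-6*a*d)))*hr +
              (2*a*(24*a*c-9*b^2))*hI - (8*a^2)*hJ
          have h2 : c + 3*b*r + 6*a*r^2 = 0 := by
            rcases mul_eq_zero.mp key with h | h
            · exact absurd (pow_eq_zero_iff (by norm_num) |>.mp h) hal
            · exact h
          have h3 : 3*a*r*s = -3*b*r - 9*a*r^2 := by linear_combination (3*r)*hs
          linear_combination h2 - h3
        have hdd : d = -(a*r^3) - 3*a*r^2*s := by
          have key : (8*a*c-3*b^2)^3 * (d - 3*b*r^2 - 8*a*r^3) = 0 := by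
            linear_combination
              (4*a*(b^3-16*a^2*d))*hJ - ((24*a*c-9*b^2)*(b^3-16*a^2*d))*hI +
              (-(3*b*(8*a*c-3*b^2)*((8*a*c-3*b^2)*r + (b*c-6*a*d)))
                - 8*a*(((8*a*c-3*b^2)*r)^2 + (b*c-6*a*d)*((8*a*c-3*b^2)*r)
                  + (b*c-6*a*d)^2))*hr
          have h2 : d - 3*b*r^2 - 8*a*r^3 = 0 := by
            rcases mul_eq_zero.mp key with h | h
            · exact absurd (pow_eq_zero_iff (by norm_num) |>.mp h) hal
            · exact h
          have h3 : 3*a*r^2*s = -3*b*r^2 - 9*a*r^3 := by linear_combination (3*r^2)*hs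
          linear_combination h2 + h3
        have hee : e = a*r^3*s := by
          have key : (12*a) * ((8*a*c-3*b^2)^4 * (e + b*r^3 + 3*a*r^4)) = 0 := by
            linear_combination
              ((8*a*c-3*b^2)^4)*hI +
              ((4*a)*(-9*b^6 + 60*a*b^4*c - 156*a^2*b^2*c^2 + 36*a^2*b^3*d
                + 128*a^3*c^3 + 48*a^3*b*c*d - 432*a^4*d^2))*hJ -
              ((24*a*c-9*b^2)*(-9*b^6 + 60*a*b^4*c - 156*a^2*b^2*c^2 + 36*a^2*b^3*d
                + 128*a^3*c^3 + 48*a^3*b*c*d - 432*a^4*d^2))*hI +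
              (12*a*(b*(8*a*c-3*b^2)*(((8*a*c-3*b^2)*r)^2
                  + (b*c-6*a*d)*((8*a*c-3*b^2)*r) + (b*c-6*a*d)^2)
                + 3*a*(((8*a*c-3*b^2)*r) + (b*c-6*a*d))
                    *(((8*a*c-3*b^2)*r)^2 + (b*c-6*a*d)^2)))*hr
          have h1 : (8*a*c-3*b^2)^4 * (e + b*r^3 + 3*a*r^4) = 0 := by
            rcases mul_eq_zero.mp key with h | h
            · exact absurd (by linarith : a = 0) ha
            · exact h
          have h2 : e + b*r^3 + 3*a*r^4 = 0 := by
            rcases mul_eq_zero.mp h1 with h | h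
            · exact absurd (pow_eq_zero_iff (by norm_num) |>.mp h) hal
            · exact h
          have h3 : a*r^3*s = -b*r^3 - 3*a*r^4 := by linear_combination (r^3)*hs
          linear_combination h2 - h3
        have hQeq : ∀ X Y : ℝ, Qf a b c d e X Y
            = 1 * (1*X + (-r)*Y)^3 * (a*X + (-(a*s))*Y) := by
          intro X Y
          simp only [Qf]
          linear_combination X^3*Y*hbb + X^2*Y^2*hcc + X*Y^3*hdd + Y^4*hee
        have hHval : ∀ X Y : ℝ, HessQ a b c d e X Y
            = -9*a^2*(r-s)^2*(X-r*Y)^4 := by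
          intro X Y
          rw [hessQ_eq, hbb, hcc, hdd, hee]; ring
        push_neg at hH
        obtain ⟨X0, Y0, hXY⟩ := hH
        rw [hHval] at hXY
        have hrs : r ≠ s := by
          intro hrseq
          exact hXY (by rw [hrseq]; ring)
        refine ⟨1, 1, -r, a, -(a*s), one_ne_zero, by simp, by simp [ha], ?_, hQeq⟩
        have : 1 * -(a*s) - -r*a = a*(r-s) := by ring
        rw [this]
        exact mul_ne_zero ha (sub_ne_zero_of_ne hrs)
  · rintro ⟨c0, p, q, p', q', hc0, hpq, hpq', hdet, h⟩
    simp only [Qf] at h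
    have ha : a = c0*p^3*p' := by linear_combination h 1 0
    have he : e = c0*q^3*q' := by linear_combination h 0 1
    have hb : b = c0*(3*p^2*q*p' + p^3*q') := by
      linear_combination (-2)*(h 1 0) + (1/2)*(h 0 1) + (-1/2)*(h 1 1)
        + (-1/6)*(h 1 (-1)) + (1/6)*(h 2 1)
    have hc : c = c0*(3*p*q^2*p' + 3*p^2*q*q') := by
      linear_combination (-1)*(h 1 0) + (-1)*(h 0 1) + (1/2)*(h 1 1) + (1/2)*(h 1 (-1))
    have hd : d = c0*(q^3*p' + 3*p*q^2*q') := by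
      linear_combination 2*(h 1 0) + (-1/2)*(h 0 1) + 1*(h 1 1)
        + (-1/3)*(h 1 (-1)) + (-1/6)*(h 2 1)
    refine ⟨?_, ?_, ?_⟩
    · rw [Iinv, ha, hb, hc, hd, he]; ring
    · rw [Jinv, ha, hb, hc, hd, he]; ring
    · intro hall
      have hval := hall p q
      rw [hessQ_eq, ha, hb, hc, hd, he] at hval
      have hval2 : -9*c0^2*(p*q'-q*p')^2*(p^2+q^2)^4 = 0 := by
        linear_combination hval
      have hpq2 : p^2 + q^2 ≠ 0 := by
        intro h0
        apply hpq
        have hp : p = 0 := by nlinarith [sq_nonneg p, sq_nonneg q]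
        have hq : q = 0 := by nlinarith [sq_nonneg p, sq_nonneg q]
        simp [hp, hq]
      have : (-9 : ℝ) * c0^2 * (p*q'-q*p')^2 * (p^2+q^2)^4 ≠ 0 := by
        exact mul_ne_zero (mul_ne_zero (mul_ne_zero (by norm_num) (pow_ne_zero 2 hc0))
          (pow_ne_zero 2 hdet)) (pow_ne_zero 4 hpq2)
      exact this (by linear_combination hval2)
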